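/- arXiv:1307.8028 — 5 statements merged into one kernel-verified Lean document; each statement's English description precedes it below -/
import Mathlib

section
/- Let δ ∈ (0,1), n ≥ 1, c = 2δ^(n²), d = 4δ^(n²+n) with δ^n ≤ 1/4. If complex numbers z₁, z₂ satisfy (z₁^n - c)/(1 - c·z₁^n) = z₂^(n²), |z₁^n| ≤ 1, and |z₂| < δ, then |z₁|^n < 4δ^(n²). -/
theorem stmt_2 (δ : ℝ) (n : ℕ) (hδ0 : 0 < δ) (hδ1 : δ < 1) (hn : 1 ≤ n)
    (hδn : δ ^ n ≤ 1 / 4) (z₁ z₂ : ℂ)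
    (hden : 1 - (2 * δ ^ (n ^ 2) : ℂ) * z₁ ^ n ≠ 0)
    (hrel : (z₁ ^ n - (2 * δ ^ (n ^ 2) : ℂ)) / (1 - (2 * δ ^ (n ^ 2) : ℂ) * z₁ ^ n)
        = z₂ ^ (n ^ 2))
    (hz1 : ‖z₁ ^ n‖ ≤ 1) (hz2 : ‖z₂‖ < δ) :
    ‖z₁‖ ^ n < 4 * δ ^ (n ^ 2) := by
  have key : z₁ ^ n - (2 * δ ^ (n ^ 2) : ℂ)
      = z₂ ^ (n ^ 2) * (1 - (2 * δ ^ (n ^ 2) : ℂ) * z₁ ^ n) := by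
    rw [div_eq_iff hden] at hrel
    linear_combination hrel
  have hd0 : 0 < δ ^ (n ^ 2) := pow_pos hδ0 _
  have hdn2 : δ ^ (n ^ 2) ≤ δ ^ n := pow_le_pow_of_le_one hδ0.le hδ1.le (Nat.le_self_pow (by positivity) n)
  have hdhalf : δ ^ (n ^ 2) ≤ 1 / 4 := hdn2.trans hδn
  have habs2 : ‖2 * (δ : ℂ) ^ (n ^ 2)‖ = 2 * δ ^ (n ^ 2) := by
    rw [norm_mul, norm_pow]
    simp [abs_of_pos hδ0]
  have hden_le : ‖1 - (2 * δ ^ (n ^ 2) : ℂ) * z₁ ^ n‖ ≤ 2 := by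
    calc ‖1 - (2 * δ ^ (n ^ 2) : ℂ) * z₁ ^ n‖
        ≤ ‖(1:ℂ)‖ + ‖(2 * δ ^ (n ^ 2) : ℂ) * z₁ ^ n‖ := by
          apply norm_sub_le
      _ ≤ 1 + 2 * δ ^ (n ^ 2) * 1 := by
          rw [norm_one, norm_mul]
          push_cast
          rw [habs2]
          gcongr
      _ ≤ 2 := by nlinarith
  have hz2pow : ‖z₂‖ ^ (n ^ 2) < δ ^ (n ^ 2) :=
    pow_lt_pow_left₀ hz2 (norm_nonneg _) (by positivity)
  have hsub : ‖z₁ ^ n - (2 * δ ^ (n ^ 2) : ℂ)‖ < 2 * δ ^ (n ^ 2) := by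
    rw [key, norm_mul, norm_pow]
    calc ‖z₂‖ ^ (n ^ 2) * ‖1 - (2 * δ ^ (n ^ 2) : ℂ) * z₁ ^ n‖
        ≤ ‖z₂‖ ^ (n ^ 2) * 2 := by gcongr <;> positivity
      _ < δ ^ (n ^ 2) * 2 := by gcongr
      _ = 2 * δ ^ (n ^ 2) := by ring
  have : ‖z₁ ^ n‖ < 4 * δ ^ (n ^ 2) := by
    calc ‖z₁ ^ n‖
        ≤ ‖z₁ ^ n - (2 * δ ^ (n ^ 2) : ℂ)‖ + ‖(2 * δ ^ (n ^ 2) : ℂ)‖ := by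
          have := norm_sub_le (z₁ ^ n - (2 * δ ^ (n ^ 2) : ℂ)) (-(2 * δ ^ (n ^ 2) : ℂ))
          simpa using this
      _ < 2 * δ ^ (n ^ 2) + 2 * δ ^ (n ^ 2) := by
          push_cast
          rw [habs2]
          linarith
      _ = 4 * δ ^ (n ^ 2) := by ring
  rwa [norm_pow] at this
end

section
/- Let δ ∈ (0,1), n ≥ 1, c = 2δ^(n²), d = 4δ^(n²+n). For every pair (z₁, z₂) ∈ ℂ² with d^(1/n) < |z₁| < 1, |z₂| < 1, 1 - c·z₁^n ≠ 0, and (z₁^n - c)/(1 - c·z₁^n) = z₂^(n²), we have max(|d^(1/n)/z₁|, |z₂|) ≥ δ. -/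
theorem stmt_4 (δ : ℝ) (n : ℕ) (hδ0 : 0 < δ) (hδ1 : δ < 1) (hn : 1 ≤ n)
    (hδn : δ ^ n ≤ 1 / 4) (z₁ z₂ : ℂ)
    (hz1lo : ((4 * δ ^ (n ^ 2 + n)) ^ ((1 : ℝ) / n) : ℝ) < ‖z₁‖)
    (hz1hi : ‖z₁‖ < 1) (hz2 : ‖z₂‖ < 1)
    (hden : 1 - (2 * δ ^ (n ^ 2) : ℂ) * z₁ ^ n ≠ 0)
    (hrel : (z₁ ^ n - (2 * δ ^ (n ^ 2) : ℂ)) / (1 - (2 * δ ^ (n ^ 2) : ℂ) * z₁ ^ n)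
        = z₂ ^ (n ^ 2)) :
    max (‖(((4 * δ ^ (n ^ 2 + n)) ^ ((1 : ℝ) / n) : ℝ) / z₁)‖)
        (‖z₂‖) ≥ δ := by
  by_contra h
  push_neg at h
  rw [max_lt_iff] at h
  obtain ⟨h1, h2⟩ := h
  have hn0 : n ≠ 0 := by omega
  have hd : (0:ℝ) < 4 * δ ^ (n ^ 2 + n) := by positivity
  set D : ℝ := (4 * δ ^ (n ^ 2 + n)) ^ ((1:ℝ)/n) with hD
  have hD0 : 0 < D := Real.rpow_pos_of_pos hd _
  have hz1pos : 0 < ‖z₁‖ := lt_trans hD0 hz1lo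
  have habs1 : ‖(D:ℂ)/z₁‖ = D / ‖z₁‖ := by
    rw [norm_div, Complex.norm_real, Real.norm_eq_abs, abs_of_pos hD0]
  have hDlt : D < δ * ‖z₁‖ := by
    rw [habs1, div_lt_iff₀ hz1pos] at h1; linarith
  have hDn : D ^ n = 4 * δ ^ (n ^ 2 + n) := by
    rw [hD, one_div, Real.rpow_inv_natCast_pow hd.le hn0]
  have hpow : D ^ n < (δ * ‖z₁‖) ^ n :=
    pow_lt_pow_left₀ hDlt hD0.le hn0
  have hδnpos : (0:ℝ) < δ ^ n := pow_pos hδ0 n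
  have hA : 4 * δ ^ (n ^ 2) < ‖z₁‖ ^ n := by
    rw [hDn, mul_pow, pow_add] at hpow
    have := (mul_lt_mul_iff_right₀ hδnpos).mp (by linarith [hpow] : δ ^ n * (4 * δ ^ (n ^ 2)) < δ ^ n * ‖z₁‖ ^ n)
    linarith
  set c : ℝ := 2 * δ ^ (n ^ 2) with hc
  have hcpos : (0:ℝ) < c := by positivity
  -- from hrel
  have hcc : ((c:ℝ):ℂ) = 2 * (δ:ℂ) ^ (n ^ 2) := by simp [hc, Complex.ofReal_mul, Complex.ofReal_pow, Complex.ofReal_ofNat]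
  have heq : z₁ ^ n - (c:ℂ) = z₂ ^ (n ^ 2) * (1 - (c:ℂ) * z₁ ^ n) := by
    have h' := hrel
    rw [div_eq_iff hden] at h'
    rw [hcc]
    linear_combination h'
  have hz2pow : ‖z₂ ^ (n ^ 2)‖ < δ ^ (n ^ 2) := by
    rw [norm_pow]
    exact pow_lt_pow_left₀ h2 (norm_nonneg z₂) (by positivity)
  have hub : ‖1 - (c:ℂ) * z₁ ^ n‖ ≤ 1 + c := by
    calc ‖1 - (c:ℂ) * z₁ ^ n‖ ≤ ‖(1:ℂ)‖ + ‖(c:ℂ) * z₁ ^ n‖ :=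
          norm_sub_le _ _
      _ = 1 + c * ‖z₁‖ ^ n := by
          rw [norm_one, norm_mul, norm_pow, Complex.norm_real, Real.norm_eq_abs, abs_of_pos hcpos]
      _ ≤ 1 + c := by
          nlinarith [pow_le_one₀ (norm_nonneg z₁) hz1hi.le (n := n)]
  have hlb : ‖z₁‖ ^ n - c ≤ ‖z₁ ^ n - (c:ℂ)‖ := by
    have := norm_sub_norm_le (z₁ ^ n) ((c:ℝ):ℂ)
    rw [norm_pow, Complex.norm_real, Real.norm_eq_abs, abs_of_pos hcpos] at this
    linarith
  have hkey : ‖z₁‖ ^ n - c < δ ^ (n ^ 2) * (1 + c) := by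
    calc ‖z₁‖ ^ n - c ≤ ‖z₁ ^ n - (c:ℂ)‖ := hlb
      _ = ‖z₂ ^ (n ^ 2)‖ * ‖1 - (c:ℂ) * z₁ ^ n‖ := by
          rw [heq, norm_mul]
      _ < δ ^ (n ^ 2) * (1 + c) := by
          have hden' : 1 - ((c:ℝ):ℂ) * z₁ ^ n ≠ 0 := by rw [hcc]; exact hden
          have hpos : (0:ℝ) < ‖1 - (c:ℂ) * z₁ ^ n‖ :=
            norm_pos_iff.mpr hden'
          nlinarith [norm_nonneg (z₂ ^ (n ^ 2))]
  have hle : δ ^ (n ^ 2) ≤ δ ^ n :=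
    pow_le_pow_of_le_one hδ0.le hδ1.le (Nat.le_self_pow two_ne_zero n)
  have hδn2 : δ ^ (n ^ 2) ≤ 1 / 4 := le_trans hle hδn
  rw [hc] at hkey
  nlinarith [pow_pos hδ0 (n ^ 2)]
end

section
/- Let 0 < d < c < 1 and let f be a function holomorphic on a neighborhood of the closed annulus {z ∈ ℂ : d ≤ |z| ≤ 1}. Suppose |f(z)| ≤ K·ε for all |z| = 1 and |f(z)| ≤ K for all |z| = d. Then |f(c)| ≤ K·ε/(1-c) + K·d/(c-d). -/
open Complex Metric Set Real

theorem stmt_6 (d c ε K : ℝ) (hd : 0 < d) (hdc : d < c) (hc : c < 1)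
    (hε : 0 < ε) (hK : 0 < K) (f : ℂ → ℂ)
    (hf : ∃ U : Set ℂ, IsOpen U ∧
      {z : ℂ | d ≤ ‖z‖ ∧ ‖z‖ ≤ 1} ⊆ U ∧ DifferentiableOn ℂ f U)
    (h1 : ∀ z : ℂ, ‖z‖ = 1 → ‖f z‖ ≤ K * ε)
    (hd' : ∀ z : ℂ, ‖z‖ = d → ‖f z‖ ≤ K) :
    ‖f (c : ℂ)‖ ≤ K * ε / (1 - c) + K * d / (c - d) := by
  obtain ⟨U, hUo, hUsub, hfd⟩ := hf
  set w : ℂ := (c : ℂ) with hw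
  have hc0 : (0:ℝ) < c := hd.trans hdc
  have habsw : ‖w‖ = c := by
    simp [hw, abs_of_pos hc0]
  have hAU : ∀ z : ℂ, d ≤ ‖z‖ → ‖z‖ ≤ 1 → z ∈ U := fun z h1 h2 =>
    hUsub ⟨h1, h2⟩
  have hdiffAt : ∀ z : ℂ, d ≤ ‖z‖ → ‖z‖ ≤ 1 → DifferentiableAt ℂ f z :=
    fun z h1 h2 => (hfd.differentiableAt (hUo.mem_nhds (hAU z h1 h2)))
  have hwA : DifferentiableAt ℂ f w :=
    hdiffAt w (by rw [habsw]; exact hdc.le) (by rw [habsw]; exact hc.le)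
  set g : ℂ → ℂ := dslope f w with hg
  -- continuity of g on the closed annulus
  have hgc : ContinuousOn g (closedBall (0:ℂ) 1 \ ball 0 d) := by
    intro x hx
    rcases eq_or_ne x w with rfl | hne
    · exact (continuousAt_dslope_same.2 hwA).continuousWithinAt
    · have hx1 : ‖x‖ ≤ 1 := by
        simpa [Complex.dist_eq] using mem_closedBall.1 hx.1
      have hx2 : d ≤ ‖x‖ := by
        have := hx.2
        simp only [mem_ball, Complex.dist_eq, sub_zero, not_lt] at this
        exact this
      exact ((continuousAt_dslope_of_ne hne).2 (hdiffAt x hx2 hx1).continuousAt).continuousWithinAt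
  -- differentiability of g off {w}
  have hgd : ∀ z ∈ (ball (0:ℂ) 1 \ closedBall 0 d) \ {w}, DifferentiableAt ℂ g z := by
    intro z hz
    have hne : z ≠ w := hz.2
    have hz1 : ‖z‖ ≤ 1 := by
      have := mem_ball.1 hz.1.1
      simp only [Complex.dist_eq, sub_zero] at this
      exact this.le
    have hz2 : d ≤ ‖z‖ := by
      have := hz.1.2
      simp only [mem_closedBall, Complex.dist_eq, sub_zero, not_le] at this
      exact this.le
    exact (differentiableAt_dslope_of_ne hne).2 (hdiffAt z hz2 hz1)
  have key : (∮ z in C(0, 1), g z) = ∮ z in C(0, d), g z :=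
    Complex.circleIntegral_eq_of_differentiable_on_annulus_off_countable hd
      (le_of_lt (hdc.trans hc)) (Set.countable_singleton w) hgc hgd
  -- w is not on either circle
  have hne1 : ∀ z ∈ sphere (0:ℂ) 1, z ≠ w := by
    intro z hz h
    rw [mem_sphere, Complex.dist_eq, sub_zero] at hz
    rw [h, habsw] at hz; exact hc.ne hz
  have hned : ∀ z ∈ sphere (0:ℂ) d, z ≠ w := by
    intro z hz h
    rw [mem_sphere, Complex.dist_eq, sub_zero] at hz
    rw [h, habsw] at hz; exact hdc.ne' hz
  -- rewrite the circle integrals of g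
  have hEq : ∀ (R : ℝ), (∀ z ∈ sphere (0:ℂ) R, z ≠ w) → (0:ℝ) ≤ R →
      ContinuousOn f (sphere (0:ℂ) R) →
      (∮ z in C(0, R), g z)
        = (∮ z in C(0, R), (z - w)⁻¹ • f z) - (∮ z in C(0, R), (z - w)⁻¹ • f w) := by
    intro R hne hR hfc
    rw [← circleIntegral.integral_sub]
    · refine circleIntegral.integral_congr hR fun z hz => ?_
      have hzw : z ≠ w := hne z hz
      rw [hg, dslope_of_ne f hzw, slope_def_field]
      rw [smul_eq_mul, smul_eq_mul, ← mul_sub, div_eq_inv_mul]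
    · exact (((continuousOn_id.sub continuousOn_const).inv₀
        fun z hz => sub_ne_zero.2 (hne z hz)).smul hfc).circleIntegrable hR
    · exact (((continuousOn_id.sub continuousOn_const).inv₀
        fun z hz => sub_ne_zero.2 (hne z hz)).smul continuousOn_const).circleIntegrable hR
  have habs_sphere : ∀ (R : ℝ) (z : ℂ), z ∈ sphere (0:ℂ) R → ‖z‖ = R := by
    intro R z hz
    have := mem_sphere.1 hz
    rwa [Complex.dist_eq, sub_zero] at this
  have hfc1 : ContinuousOn f (sphere (0:ℂ) 1) := fun z hz =>
    (hdiffAt z (by rw [habs_sphere 1 z hz]; exact (hdc.trans hc).le)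
      (by rw [habs_sphere 1 z hz]) ).continuousAt.continuousWithinAt
  have hfcd : ContinuousOn f (sphere (0:ℂ) d) := fun z hz =>
    (hdiffAt z (by rw [habs_sphere d z hz])
      (by rw [habs_sphere d z hz]; exact (hdc.trans hc).le)).continuousAt.continuousWithinAt
  have hJ1 : (∮ z in C(0, 1), (z - w)⁻¹) = 2 * Real.pi * Complex.I := by
    apply circleIntegral.integral_sub_inv_of_mem_ball
    rw [mem_ball, Complex.dist_eq, sub_zero, habsw]; exact hc
  have hJd : (∮ z in C(0, d), (z - w)⁻¹) = 0 := by
    apply Complex.circleIntegral_eq_zero_of_differentiable_on_off_countable hd.le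
      (Set.countable_empty)
    · intro z hz
      have hz' : ‖z‖ ≤ d := by
        have := mem_closedBall.1 hz; rwa [Complex.dist_eq, sub_zero] at this
      have hzw : z ≠ w := by
        intro h; rw [h, habsw] at hz'; exact absurd hz' (not_le.2 hdc)
      exact ((continuousOn_id.sub continuousOn_const).inv₀
        (fun x hx => sub_ne_zero.2 (by
          intro h
          simp only [id_eq] at h
          have hx' : ‖x‖ ≤ d := by
            have := mem_closedBall.1 hx; rwa [Complex.dist_eq, sub_zero] at this
          rw [h, habsw] at hx'; exact absurd hx' (not_le.2 hdc)))) z hz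
    · intro z hz
      have hz' : ‖z‖ < d := by
        have := mem_ball.1 hz.1; rwa [Complex.dist_eq, sub_zero] at this
      have hzw : z - w ≠ 0 := sub_ne_zero.2 (by
        intro h; rw [h, habsw] at hz'; exact absurd hz'.le (not_le.2 hdc))
      exact (differentiableAt_id.sub_const w).inv hzw
  -- the two smul-const integrals
  have hS1 : (∮ z in C(0, 1), (z - w)⁻¹ • f w) = (2 * Real.pi * Complex.I) * f w := by
    rw [show (fun z : ℂ => (z - w)⁻¹ • f w) = fun z : ℂ => (z - w)⁻¹ • f w from rfl]
    rw [circleIntegral.integral_smul_const, hJ1]; simp [smul_eq_mul]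
  have hSd : (∮ z in C(0, d), (z - w)⁻¹ • f w) = 0 := by
    rw [circleIntegral.integral_smul_const, hJd]; simp
  have hEq1 := hEq 1 hne1 zero_le_one hfc1
  have hEqd := hEq d hned hd.le hfcd
  rw [hS1] at hEq1
  rw [hSd, sub_zero] at hEqd
  -- main identity
  have hmain : (2 * Real.pi * Complex.I) * f w
      = (∮ z in C(0, 1), (z - w)⁻¹ • f z) - ∮ z in C(0, d), (z - w)⁻¹ • f z := by
    have := key
    rw [hEq1, hEqd] at this
    linear_combination -this
  -- bounds
  have hb1 : ‖∮ z in C(0, 1), (z - w)⁻¹ • f z‖ ≤ 2 * Real.pi * 1 * (K * ε / (1 - c)) := by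
    apply circleIntegral.norm_integral_le_of_norm_le_const zero_le_one
    intro z hz
    have hz1 : ‖z‖ = 1 := habs_sphere 1 z hz
    have hlow : 1 - c ≤ ‖z - w‖ := by
      have := norm_sub_norm_le z w
      rw [hz1, habsw] at this
      linarith
    have h1c : (0:ℝ) < 1 - c := by linarith
    rw [norm_smul, norm_inv]
    calc ‖z - w‖⁻¹ * ‖f z‖ ≤ ‖z - w‖⁻¹ * (K * ε) := by
          apply mul_le_mul_of_nonneg_left (h1 z hz1) (by positivity)
      _ ≤ (1 - c)⁻¹ * (K * ε) := by
          apply mul_le_mul_of_nonneg_right _ (by positivity)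
          exact inv_anti₀ h1c hlow
      _ = K * ε / (1 - c) := by ring
  have hbd : ‖∮ z in C(0, d), (z - w)⁻¹ • f z‖ ≤ 2 * Real.pi * d * (K / (c - d)) := by
    apply circleIntegral.norm_integral_le_of_norm_le_const hd.le
    intro z hz
    have hz1 : ‖z‖ = d := habs_sphere d z hz
    have hlow : c - d ≤ ‖z - w‖ := by
      have := norm_sub_norm_le w z
      rw [hz1, habsw, norm_sub_rev] at this
      linarith
    have hcd : (0:ℝ) < c - d := by linarith
    rw [norm_smul, norm_inv]
    calc ‖z - w‖⁻¹ * ‖f z‖ ≤ ‖z - w‖⁻¹ * K := by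
          apply mul_le_mul_of_nonneg_left (hd' z hz1) (by positivity)
      _ ≤ (c - d)⁻¹ * K := by
          apply mul_le_mul_of_nonneg_right _ hK.le
          exact inv_anti₀ hcd hlow
      _ = K / (c - d) := by ring
  have hnorm : 2 * Real.pi * ‖f w‖
      ≤ 2 * Real.pi * 1 * (K * ε / (1 - c)) + 2 * Real.pi * d * (K / (c - d)) := by
    have h := hmain
    have h2 : ‖(2 * (Real.pi:ℂ) * Complex.I) * f w‖ = 2 * Real.pi * ‖f w‖ := by
      rw [norm_mul]
      simp [abs_of_pos Real.pi_pos]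
    calc 2 * Real.pi * ‖f w‖ = ‖(2 * (Real.pi:ℂ) * Complex.I) * f w‖ := h2.symm
      _ = ‖(∮ z in C(0, 1), (z - w)⁻¹ • f z) - ∮ z in C(0, d), (z - w)⁻¹ • f z‖ := by rw [h]
      _ ≤ ‖∮ z in C(0, 1), (z - w)⁻¹ • f z‖ + ‖∮ z in C(0, d), (z - w)⁻¹ • f z‖ :=
          norm_sub_le _ _
      _ ≤ _ := add_le_add hb1 hbd
  have hpi : (0:ℝ) < 2 * Real.pi := by positivity
  have : ‖f w‖ ≤ K * ε / (1 - c) + K * d / (c - d) := by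
    have hstep : 2 * Real.pi * ‖f w‖ ≤ 2 * Real.pi * (K * ε / (1 - c) + K * d / (c - d)) := by
      calc 2 * Real.pi * ‖f w‖
          ≤ 2 * Real.pi * 1 * (K * ε / (1 - c)) + 2 * Real.pi * d * (K / (c - d)) := hnorm
        _ = 2 * Real.pi * (K * ε / (1 - c) + K * d / (c - d)) := by ring
    exact le_of_mul_le_mul_left hstep hpi
  simpa using this
end

section
/- Let δ ∈ (0,1), n ≥ 1 with δ^n ≤ 1/4, c = 2δ^(n²), d = 4δ^(n²+n). Then for any z₂ ∈ ℂ with |z₂| < δ and any z₁ ∈ ℂ with |z₁| ≤ 1 and 1 - c·z₁^n ≠ 0 satisfying (z₁^n - c)/(1 - c·z₁^n) = z₂^(n²), the point z₁ is nonzero; in fact |z₁|^n > d (i.e., z₁ lies in the domain D₁). -/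
set_option maxHeartbeats 800000

private lemma aux_ineq (a u v : ℝ) (ha0 : 0 < a) (ha14 : a ≤ 1 / 4)
    (hs : u ^ 2 + v ^ 2 ≤ a ^ 2) (hu : -a ≤ u) :
    a ^ 2 * ((1 + 2 * a * u) ^ 2 + (2 * a * v) ^ 2) < (2 * a + u) ^ 2 + v ^ 2 := by
  have ha4 : (0:ℝ) ≤ 1 - 4 * a ^ 4 := by
    have h := pow_le_pow_left₀ ha0.le ha14 4
    norm_num at h; linarith
  have hb1 : (0:ℝ) ≤ (1 - 4 * a ^ 4) * (u + a) := mul_nonneg ha4 (by linarith)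
  have hb2 : (0:ℝ) ≤ 2 * a - 4 * a ^ 3 + 8 * a ^ 5 := by nlinarith [sq_nonneg (a ^ 2)]
  have hb : (0:ℝ) ≤ 3 * a - 4 * a ^ 3 + 4 * a ^ 5 + u * (1 - 4 * a ^ 4) := by nlinarith
  nlinarith [mul_nonneg (by linarith : (0:ℝ) ≤ u + a) hb, sq_nonneg v,
    mul_pos (mul_pos (mul_pos ha0 ha0) (mul_pos ha0 ha0))
      (by nlinarith : (0:ℝ) < 1 - a ^ 2), sq_nonneg u]

theorem stmt_12 (δ : ℝ) (n : ℕ) (hδ0 : 0 < δ) (hδ1 : δ < 1) (hn : 1 ≤ n)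
    (hδn : δ ^ n ≤ 1 / 4) (z₁ z₂ : ℂ) (hz2 : ‖z₂‖ < δ)
    (hz1 : ‖z₁‖ ≤ 1)
    (hden : 1 - (2 * δ ^ (n ^ 2) : ℂ) * z₁ ^ n ≠ 0)
    (hrel : (z₁ ^ n - (2 * δ ^ (n ^ 2) : ℂ)) / (1 - (2 * δ ^ (n ^ 2) : ℂ) * z₁ ^ n)
        = z₂ ^ (n ^ 2)) :
    z₁ ≠ 0 ∧ ‖z₁‖ ^ n > 4 * δ ^ (n ^ 2 + n) := by
  set a : ℝ := δ ^ (n ^ 2) with ha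
  have ha0 : 0 < a := pow_pos hδ0 _
  have hδn0 : 0 < δ ^ n := pow_pos hδ0 _
  have ha14 : a ≤ 1 / 4 := by
    have h1 : a = (δ ^ n) ^ n := by rw [ha, ← pow_mul, sq]
    have h2 : (δ ^ n) ^ n ≤ (δ ^ n) ^ 1 :=
      pow_le_pow_of_le_one (le_of_lt hδn0) (by linarith) hn
    simpa [h1] using h2.trans (by simpa using hδn)
  set w : ℂ := z₂ ^ (n ^ 2) with hw
  have hc : (2 * (δ : ℂ) ^ (n ^ 2)) = ((2 * a : ℝ) : ℂ) := by push_cast [ha]; ring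
  have hq : ‖w‖ ≤ a := by
    rw [hw, norm_pow, ha]
    exact pow_le_pow_left₀ (norm_nonneg _) hz2.le _
  have hda : 4 * δ ^ (n ^ 2 + n) ≤ a := by
    rw [pow_add, ← ha]
    nlinarith
  rw [div_eq_iff hden] at hrel
  have h2 : z₁ ^ n * (1 + ((2 * a : ℝ) : ℂ) * w) = ((2 * a : ℝ) : ℂ) + w := by
    rw [← hc]; linear_combination hrel
  have heq : ‖z₁‖ ^ n * ‖1 + ((2 * a : ℝ) : ℂ) * w‖
      = ‖((2 * a : ℝ) : ℂ) + w‖ := by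
    rw [← norm_pow, ← norm_mul, h2]
  clear_value a w
  set u : ℝ := w.re with hu'
  set v : ℝ := w.im with hv'
  have hs : u ^ 2 + v ^ 2 ≤ a ^ 2 := by
    have h3 := Complex.sq_norm w
    rw [Complex.normSq_apply] at h3
    nlinarith [pow_le_pow_left₀ (norm_nonneg w) hq 2]
  have hu : -a ≤ u := by
    have h := (abs_le.mp ((Complex.abs_re_le_norm w).trans hq)).1
    simpa using h
  have expand1 : Complex.normSq (1 + ((2 * a : ℝ) : ℂ) * w)
      = (1 + 2 * a * u) ^ 2 + (2 * a * v) ^ 2 := by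
    simp [Complex.normSq_apply, Complex.add_re, Complex.add_im, Complex.mul_re,
      Complex.mul_im, ← hu', ← hv']
    ring
  have expand2 : Complex.normSq (((2 * a : ℝ) : ℂ) + w)
      = (2 * a + u) ^ 2 + v ^ 2 := by
    simp [Complex.normSq_apply, Complex.add_re, Complex.add_im, ← hu', ← hv']
    ring
  have hsq : a ^ 2 * Complex.normSq (1 + ((2 * a : ℝ) : ℂ) * w)
      < Complex.normSq (((2 * a : ℝ) : ℂ) + w) := by
    rw [expand1, expand2]
    exact aux_ineq a u v ha0 ha14 hs hu
  have key : a * ‖1 + ((2 * a : ℝ) : ℂ) * w‖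
      < ‖((2 * a : ℝ) : ℂ) + w‖ := by
    have hA := norm_nonneg (((2 * a : ℝ) : ℂ) + w)
    have hB := norm_nonneg (1 + ((2 * a : ℝ) : ℂ) * w)
    rw [← Complex.sq_norm, ← Complex.sq_norm] at hsq
    nlinarith [mul_nonneg ha0.le hB]
  have hB := norm_nonneg (1 + ((2 * a : ℝ) : ℂ) * w)
  have hxa : a < ‖z₁‖ ^ n := by nlinarith [key, heq]
  have hmain : ‖z₁‖ ^ n > 4 * δ ^ (n ^ 2 + n) := by linarith
  refine ⟨?_, hmain⟩
  intro h0
  have hn0 : n ≠ 0 := by omega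
  rw [h0] at hmain
  simp [zero_pow hn0] at hmain
  linarith [pow_pos hδ0 (n ^ 2 + n)]
end

section
/- For any δ ∈ (0,1) and M > 0 there exist n ≥ 1 and reals c, d with 0 < d < c < 1/2 such that: (i) any z₁, z₂ ∈ ℂ with |z₁| ≤ 1, 1 - c z₁^n ≠ 0, (z₁^n - c)/(1 - c z₁^n) = z₂^(n²), and |z₂| < δ satisfy |d^(1/n)/z₁| > δ; and (ii) 4δ^(n+1)/(1-c) + d/(c-d) < 1/M. -/
theorem stmt_18 (δ M : ℝ) (hδ0 : 0 < δ) (hδ1 : δ < 1) (hM : 0 < M) :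
    ∃ (n : ℕ) (c d : ℝ), 1 ≤ n ∧ 0 < d ∧ d < c ∧ c < 1 / 2 ∧
      (∀ z₁ z₂ : ℂ, ‖z₁‖ ≤ 1 →
        1 - (c : ℂ) * z₁ ^ n ≠ 0 →
        (z₁ ^ n - (c : ℂ)) / (1 - (c : ℂ) * z₁ ^ n) = z₂ ^ (n ^ 2) →
        ‖z₂‖ < δ →
        ‖((d ^ ((1 : ℝ) / n) : ℝ) / z₁)‖ > δ) ∧
      4 * δ ^ (n + 1) / (1 - c) + d / (c - d) < 1 / M := by
  obtain ⟨m, hm⟩ := exists_pow_lt_of_lt_one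
    (show (0:ℝ) < min (1/(16*M)) (1/4) by positivity) hδ1
  set n : ℕ := m + 1 with hn
  have hn0 : n ≠ 0 := by omega
  have hδn : δ ^ n < min (1/(16*M)) (1/4) :=
    lt_of_le_of_lt (pow_le_pow_of_le_one hδ0.le hδ1.le (Nat.le_succ m)) hm
  have hnM : δ ^ n < 1/(16*M) := lt_of_lt_of_le hδn (min_le_left _ _)
  have hn4 : δ ^ n < 1/4 := lt_of_lt_of_le hδn (min_le_right _ _)
  have hpn : 0 < δ ^ n := by positivity
  have hpn2 : 0 < δ ^ (n^2) := by positivity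
  have hle : δ ^ (n^2) ≤ δ ^ n :=
    pow_le_pow_of_le_one hδ0.le hδ1.le (Nat.le_self_pow (by norm_num) n)
  set c : ℝ := 2 * δ ^ (n^2) with hc
  set d : ℝ := 4 * δ ^ (n^2 + n) with hd
  have hdc : d = 4 * δ ^ (n^2) * δ ^ n := by rw [hd, pow_add]; ring
  have hd0 : 0 < d := by positivity
  have hdltc : d < c := by rw [hdc, hc]; nlinarith
  have hc2 : c < 1/2 := by rw [hc]; nlinarith
  refine ⟨n, c, d, by omega, hd0, hdltc, hc2, ?_, ?_⟩
  · intro z₁ z₂ hz1 hne heq hz2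
    rw [div_eq_iff hne] at heq
    have key : z₁ ^ n = z₂ ^ (n^2) * (1 - (c:ℂ) * z₁ ^ n) + c := by
      linear_combination heq
    set A := ‖z₁‖ with hA
    set B := ‖z₂‖ with hB
    have hA0 : 0 ≤ A := norm_nonneg _
    have hB0 : 0 ≤ B := norm_nonneg _
    have hc0 : 0 < c := by positivity
    have hBlt : B ^ (n^2) < δ ^ (n^2) :=
      pow_lt_pow_left₀ hz2 hB0 (by positivity)
    have hAn1 : A ^ n ≤ 1 := pow_le_one₀ hA0 hz1
    have hC : ‖(1 - (c:ℂ) * z₁ ^ n)‖ ≤ 1 + c := by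
      calc ‖(1 - (c:ℂ) * z₁ ^ n)‖
          ≤ ‖(1:ℂ)‖ + ‖((c:ℂ) * z₁ ^ n)‖ := by
            simpa using norm_sub_le (1:ℂ) ((c:ℂ) * z₁ ^ n)
        _ = 1 + c * A ^ n := by
            simp [norm_mul, norm_pow, Complex.norm_real, abs_of_pos hc0, hA]
        _ ≤ 1 + c := by nlinarith
    have h1 : A ^ n ≤ B ^ (n^2) * (1 + c) + c := by
      have h2 : ‖(z₁ ^ n)‖ ≤
          ‖(z₂ ^ (n^2))‖ * ‖(1 - (c:ℂ) * z₁ ^ n)‖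
            + ‖(((c:ℝ):ℂ))‖ := by
        calc ‖(z₁ ^ n)‖
            = ‖(z₂ ^ (n^2) * (1 - (c:ℂ) * z₁ ^ n) + (c:ℂ))‖ :=
              congrArg (‖·‖) key
          _ ≤ _ := (norm_add_le _ _).trans (by rw [norm_mul])
      rw [norm_pow, norm_pow, Complex.norm_real, Real.norm_eq_abs, abs_of_pos hc0] at h2
      calc A ^ n ≤ B ^ (n^2) * ‖(1 - (c:ℂ) * z₁ ^ n)‖ + c := h2
        _ ≤ B ^ (n^2) * (1 + c) + c := by
            have := mul_le_mul_of_nonneg_left hC (by positivity : (0:ℝ) ≤ B ^ (n^2))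
            linarith
    have habs : A ^ n < 4 * δ ^ (n^2) := by
      have hcsmall : c < 1 := by linarith
      nlinarith [hBlt, h1, hpn2, mul_le_mul_of_nonneg_right hBlt.le hc0.le]
    have hz10 : z₁ ≠ 0 := by
      intro h
      subst h
      rw [zero_pow hn0] at key
      have : ‖(z₂ ^ (n^2))‖ = c := by
        have : z₂ ^ (n^2) = -(c:ℂ) := by
          have : (0:ℂ) = z₂ ^ (n^2) * 1 + c := by simpa using key
          linear_combination -this
        rw [this]
        simp [Complex.norm_real, abs_of_pos hc0]
      rw [norm_pow] at this
      rw [← hB] at this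
      rw [this] at hBlt
      rw [hc] at hBlt
      linarith
    have hApos : 0 < A := norm_pos_iff.mpr hz10
    rw [norm_div, Complex.norm_real, Real.norm_eq_abs, abs_of_pos (by positivity : (0:ℝ) < d ^ ((1:ℝ)/n))]
    rw [gt_iff_lt, lt_div_iff₀ hApos]
    have hlt : (δ * A) ^ n < d := by
      rw [hdc, mul_pow]
      calc δ ^ n * A ^ n < δ ^ n * (4 * δ ^ (n^2)) :=
            (mul_lt_mul_iff_right₀ hpn).mpr habs
        _ = 4 * δ ^ (n^2) * δ ^ n := by ring
    have heqpow : ((δ * A) ^ n : ℝ) ^ ((1:ℝ)/n) = δ * A := by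
      rw [← Real.rpow_natCast (δ * A) n, ← Real.rpow_mul (by positivity)]
      rw [mul_one_div, div_self (by exact_mod_cast hn0), Real.rpow_one]
    calc δ * A = ((δ * A) ^ n : ℝ) ^ ((1:ℝ)/n) := heqpow.symm
      _ < d ^ ((1:ℝ)/n) := by
          apply Real.rpow_lt_rpow (by positivity) hlt (by positivity)
  · have h16 : 16 * M * δ ^ n < 1 := by
      have := (lt_div_iff₀ (by positivity : (0:ℝ) < 16*M)).mp hnM
      linarith
    have h1c : (1:ℝ)/2 < 1 - c := by linarith
    have hcd0 : 0 < c - d := by linarith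
    have hcdge : δ ^ (n^2) ≤ c - d := by
      rw [hc, hdc]; nlinarith
    have t1 : 4 * δ ^ (n+1) / (1 - c) < 1 / (2*M) := by
      rw [div_lt_div_iff₀ (by linarith) (by positivity)]
      have hle1 : δ ^ (n+1) ≤ δ ^ n := by
        rw [pow_succ]; nlinarith
      have h8 : 8 * M * δ ^ (n+1) ≤ 8 * M * δ ^ n :=
        mul_le_mul_of_nonneg_left hle1 (by positivity)
      linarith [h8, h16, h1c]
    have t2 : d / (c - d) < 1 / (2*M) := by
      rw [div_lt_div_iff₀ hcd0 (by positivity)]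
      rw [hdc]
      linarith [mul_le_mul_of_nonneg_left h16.le hpn2.le, hcdge, hpn2]
    have hsum : (1:ℝ)/(2*M) + 1/(2*M) = 1/M := by
      rw [← add_div, ← div_div]
      norm_num
    calc 4 * δ ^ (n + 1) / (1 - c) + d / (c - d)
        < 1/(2*M) + 1/(2*M) := add_lt_add t1 t2
      _ = 1/M := hsum
end
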